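/- Let J be a nonnegative even probability density with finite exponential moments, let c_min > 0, C̃ > 0, h̃ ∈ ℝ, and let X : [s, ∞) → ℝ be C¹ with Ẋ(t) ≥ c_min for all t. Choose c̃ > 0 such that c̃·c_min − ∫_ℝ J(y) e^{c̃ y} dy + 1 > 0. Then the function w(t, x) = −C̃ e^{−c̃(x − X(t) − h̃)} satisfies the differential inequality w_t − (J ∗ w(t,·) − w) ≤ 0 for all t ≥ s and x ∈ ℝ. -/

import Mathlib

open Real MeasureTheory Filter

theorem stmt15 (s cmin Ct ht ct : ℝ) (J : ℝ → ℝ) (X X' : ℝ → ℝ)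
    (hcmin : 0 < cmin) (hCt : 0 < Ct) (hct : 0 < ct)
    (hg : 0 < ct * cmin - (∫ y, J y * Real.exp (ct * y)) + 1)
    (hJnn : ∀ x, 0 ≤ J x) (hJeven : ∀ x, J x = J (-x))
    (hJint : Integrable J) (hJ1 : (∫ x, J x) = 1)
    (hJexp : ∀ l : ℝ, 0 < l → Integrable (fun x => J x * Real.exp (l * x)))
    (hX : ∀ t, HasDerivAt X (X' t) t) (hX' : ∀ t, cmin ≤ X' t)
    (hX'c : Continuous X') :
    ∀ t, s ≤ t → ∀ x : ℝ,
      deriv (fun τ => -Ct * Real.exp (-ct * (x - X τ - ht))) t -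
        ((∫ y, J (x - y) * (-Ct * Real.exp (-ct * (y - X t - ht)))) -
          (-Ct * Real.exp (-ct * (x - X t - ht)))) ≤ 0 := by
  intro t _ x
  set E := Real.exp (-ct * (x - X t - ht)) with hE
  have hEpos : 0 < E := Real.exp_pos _
  -- compute derivative
  have hd : HasDerivAt (fun τ => -Ct * Real.exp (-ct * (x - X τ - ht)))
      (-Ct * (E * (ct * X' t))) t := by
    have h1 : HasDerivAt (fun τ => -ct * (x - X τ - ht)) (ct * X' t) t := by
      have := ((hX t).const_sub x).sub_const ht
      have := this.const_mul (-ct)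
      exact this.congr_deriv (by ring)
    exact ((h1.exp).const_mul (-Ct)).congr_deriv (by ring)
  rw [hd.deriv]
  -- compute integral
  have hint : (∫ y, J (x - y) * (-Ct * Real.exp (-ct * (y - X t - ht)))) =
      -Ct * E * ∫ y, J y * Real.exp (ct * y) := by
    have h1 : (∫ y, J (x - y) * (-Ct * Real.exp (-ct * (y - X t - ht)))) =
        ∫ y, J y * (-Ct * Real.exp (-ct * ((x - y) - X t - ht))) := by
      rw [← MeasureTheory.integral_sub_left_eq_self
        (fun y => J y * (-Ct * Real.exp (-ct * ((x - y) - X t - ht)))) volume x]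
      congr 1
      ext y
      ring_nf
    rw [h1]
    have h2 : ∀ y, J y * (-Ct * Real.exp (-ct * ((x - y) - X t - ht))) =
        (-Ct * E) * (J y * Real.exp (ct * y)) := by
      intro y
      have he : Real.exp (-ct * ((x - y) - X t - ht)) = E * Real.exp (ct * y) := by
        rw [hE, ← Real.exp_add]; ring_nf
      rw [he]; ring
    simp_rw [h2]
    rw [MeasureTheory.integral_const_mul]
  rw [hint]
  have hXt := hX' t
  set I := ∫ y, J y * Real.exp (ct * y) with hI
  have key : 0 < ct * X' t - I + 1 := by
    have : ct * cmin ≤ ct * X' t := by nlinarith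
    linarith
  nlinarith [mul_pos hCt hEpos, mul_pos (mul_pos hCt hEpos) key]
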